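/- Let cᵥ > 0 and let χ : ℝ → ℝ be non-decreasing, concave, and bounded above. Then the renormalized total entropy 𝒮_χ, defined by 𝒮_χ(ρ,m,E) = ρ·χ(cᵥ log((E − |m|²/(2ρ))/(cᵥ ρ^γ))) when ρ > 0 and E > |m|²/(2ρ) (with γ = 1 + 1/cᵥ), 𝒮_χ(0,0,E) = 0 for E ≥ 0, and 𝒮_χ = −∞ otherwise, is a concave function on the set {ρ ≥ 0, m ∈ ℝ³, E ≥ 0}. -/

import Mathlib

open scoped Classical in
/-- The renormalized total entropy `𝒮_χ` in conservative variables `(ρ, m, E)`. -/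
noncomputable def Sren (cv : ℝ) (χ : ℝ → ℝ) (p : ℝ × EuclideanSpace ℝ (Fin 3) × ℝ) : EReal :=
  if 0 < p.1 ∧ ‖p.2.1‖ ^ 2 / (2 * p.1) < p.2.2 then
    ((p.1 * χ (cv * Real.log ((p.2.2 - ‖p.2.1‖ ^ 2 / (2 * p.1)) / (cv * p.1 ^ (1 + 1 / cv))))
      : ℝ) : EReal)
  else if p.1 = 0 ∧ p.2.1 = 0 then (0 : EReal) else ⊥

section Aux

/-- Key logarithmic identity for the specific entropy. -/
lemma Sren_ident (cv ρ e : ℝ) (hcv : 0 < cv) (hρ : 0 < ρ) (he : 0 < e) :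
    ρ * (cv * Real.log (e / (cv * ρ ^ (1 + 1 / cv)))) =
      cv * ρ * Real.log (e / ρ) - ρ * Real.log ρ - cv * Real.log cv * ρ := by
  rw [Real.log_div he.ne' (by positivity), Real.log_mul hcv.ne' (by positivity),
    Real.log_rpow hρ, Real.log_div he.ne' hρ.ne']
  field_simp
  ring

/-- Monotonicity of the entropy in the internal energy. -/
lemma Sren_mono_e (cv : ℝ) (hcv : 0 < cv) (χ : ℝ → ℝ) (hmono : Monotone χ)
    (ρ e e' : ℝ) (hρ : 0 < ρ) (he : 0 < e) (hee' : e ≤ e') :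
    ρ * χ (cv * Real.log (e / (cv * ρ ^ (1 + 1 / cv)))) ≤
      ρ * χ (cv * Real.log (e' / (cv * ρ ^ (1 + 1 / cv)))) := by
  have h : e / (cv * ρ ^ (1 + 1 / cv)) ≤ e' / (cv * ρ ^ (1 + 1 / cv)) := by gcongr
  exact mul_le_mul_of_nonneg_left
    (hmono (mul_le_mul_of_nonneg_left (Real.log_le_log (by positivity) h) hcv.le)) hρ.le

/-- Concavity of `(ρ, e) ↦ ρ · χ(cv log(e / (cv ρ^γ)))` on the positive quadrant. -/
lemma Sren_scalar_key (cv : ℝ) (hcv : 0 < cv) (χ : ℝ → ℝ) (hmono : Monotone χ)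
    (hconc : ConcaveOn ℝ Set.univ χ)
    (ρ₁ e₁ ρ₂ e₂ t : ℝ) (hρ₁ : 0 < ρ₁) (he₁ : 0 < e₁) (hρ₂ : 0 < ρ₂) (he₂ : 0 < e₂)
    (ht : 0 ≤ t) (ht1 : t ≤ 1) :
    t * (ρ₁ * χ (cv * Real.log (e₁ / (cv * ρ₁ ^ (1 + 1 / cv)))))
      + (1 - t) * (ρ₂ * χ (cv * Real.log (e₂ / (cv * ρ₂ ^ (1 + 1 / cv)))))
      ≤ (t * ρ₁ + (1 - t) * ρ₂) *
        χ (cv * Real.log ((t * e₁ + (1 - t) * e₂) /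
            (cv * (t * ρ₁ + (1 - t) * ρ₂) ^ (1 + 1 / cv)))) := by
  have ht1' : 0 ≤ 1 - t := by linarith
  have hρt : 0 < t * ρ₁ + (1 - t) * ρ₂ := by
    rcases ht.lt_or_eq with h | h
    · have := mul_nonneg ht1' hρ₂.le
      nlinarith [mul_pos h hρ₁]
    · rw [← h]; simpa using hρ₂
  have het : 0 < t * e₁ + (1 - t) * e₂ := by
    rcases ht.lt_or_eq with h | h
    · have := mul_nonneg ht1' he₂.le
      nlinarith [mul_pos h he₁]
    · rw [← h]; simpa using he₂
  set a := t * ρ₁ / (t * ρ₁ + (1 - t) * ρ₂) with ha_def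
  set b := (1 - t) * ρ₂ / (t * ρ₁ + (1 - t) * ρ₂) with hb_def
  have ha : 0 ≤ a := by positivity
  have hb : 0 ≤ b := by positivity
  have hab : a + b = 1 := by rw [ha_def, hb_def]; field_simp
  set s₁ := cv * Real.log (e₁ / (cv * ρ₁ ^ (1 + 1 / cv))) with hs₁
  set s₂ := cv * Real.log (e₂ / (cv * ρ₂ ^ (1 + 1 / cv))) with hs₂
  set sc := cv * Real.log ((t * e₁ + (1 - t) * e₂) /
      (cv * (t * ρ₁ + (1 - t) * ρ₂) ^ (1 + 1 / cv))) with hsc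
  -- log-concavity step
  have hA : a * Real.log (e₁ / ρ₁) + b * Real.log (e₂ / ρ₂) ≤
      Real.log ((t * e₁ + (1 - t) * e₂) / (t * ρ₁ + (1 - t) * ρ₂)) := by
    have h := strictConcaveOn_log_Ioi.concaveOn.2 (Set.mem_Ioi.2 (by positivity : (0:ℝ) < e₁ / ρ₁))
      (Set.mem_Ioi.2 (by positivity : (0:ℝ) < e₂ / ρ₂)) ha hb hab
    simp only [smul_eq_mul] at h
    have harg : a * (e₁ / ρ₁) + b * (e₂ / ρ₂) =
        (t * e₁ + (1 - t) * e₂) / (t * ρ₁ + (1 - t) * ρ₂) := by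
      rw [ha_def, hb_def]; field_simp
    rwa [harg] at h
  have hA2 : t * ρ₁ * Real.log (e₁ / ρ₁) + (1 - t) * ρ₂ * Real.log (e₂ / ρ₂) ≤
      (t * ρ₁ + (1 - t) * ρ₂) *
        Real.log ((t * e₁ + (1 - t) * e₂) / (t * ρ₁ + (1 - t) * ρ₂)) := by
    have h := mul_le_mul_of_nonneg_left hA hρt.le
    have heq : (t * ρ₁ + (1 - t) * ρ₂) * (a * Real.log (e₁ / ρ₁) + b * Real.log (e₂ / ρ₂)) =
        t * ρ₁ * Real.log (e₁ / ρ₁) + (1 - t) * ρ₂ * Real.log (e₂ / ρ₂) := by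
      rw [ha_def, hb_def]; field_simp
    linarith [h, heq.ge, heq.le]
  -- convexity of `x log x`
  have hB : (t * ρ₁ + (1 - t) * ρ₂) * Real.log (t * ρ₁ + (1 - t) * ρ₂) ≤
      t * (ρ₁ * Real.log ρ₁) + (1 - t) * (ρ₂ * Real.log ρ₂) := by
    have h := Real.convexOn_mul_log.2 (Set.mem_Ici.2 hρ₁.le) (Set.mem_Ici.2 hρ₂.le)
      ht ht1' (by ring)
    simpa [smul_eq_mul, mul_assoc] using h
  have h1 := Sren_ident cv ρ₁ e₁ hcv hρ₁ he₁
  have h2 := Sren_ident cv ρ₂ e₂ hcv hρ₂ he₂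
  have h3 := Sren_ident cv (t * ρ₁ + (1 - t) * ρ₂) (t * e₁ + (1 - t) * e₂) hcv hρt het
  have hA3 := mul_le_mul_of_nonneg_left hA2 hcv.le
  have h1' : ρ₁ * s₁ = cv * ρ₁ * Real.log (e₁ / ρ₁) - ρ₁ * Real.log ρ₁ - cv * Real.log cv * ρ₁ := by
    rw [hs₁]; exact h1
  have h2' : ρ₂ * s₂ = cv * ρ₂ * Real.log (e₂ / ρ₂) - ρ₂ * Real.log ρ₂ - cv * Real.log cv * ρ₂ := by
    rw [hs₂]; exact h2
  have h3' : (t * ρ₁ + (1 - t) * ρ₂) * sc =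
      cv * (t * ρ₁ + (1 - t) * ρ₂) *
          Real.log ((t * e₁ + (1 - t) * e₂) / (t * ρ₁ + (1 - t) * ρ₂))
        - (t * ρ₁ + (1 - t) * ρ₂) * Real.log (t * ρ₁ + (1 - t) * ρ₂)
        - cv * Real.log cv * (t * ρ₁ + (1 - t) * ρ₂) := by
    rw [hsc, h3]
  have hC' : t * ρ₁ * s₁ + (1 - t) * ρ₂ * s₂ ≤ (t * ρ₁ + (1 - t) * ρ₂) * sc := by
    have e1 : t * ρ₁ * s₁ = t * (ρ₁ * s₁) := by ring
    have e2 : (1 - t) * ρ₂ * s₂ = (1 - t) * (ρ₂ * s₂) := by ring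
    rw [e1, e2, h1', h2', h3']
    linarith [hA3, hB]
  have hC : a * s₁ + b * s₂ ≤ sc := by
    have heq : a * s₁ + b * s₂ = (t * ρ₁ * s₁ + (1 - t) * ρ₂ * s₂) / (t * ρ₁ + (1 - t) * ρ₂) := by
      rw [ha_def, hb_def]; field_simp; try ring
    rw [heq, div_le_iff₀ hρt]
    linarith [hC']
  have hD : a * χ s₁ + b * χ s₂ ≤ χ sc := by
    have h := hconc.2 (Set.mem_univ s₁) (Set.mem_univ s₂) ha hb hab
    simp only [smul_eq_mul] at h
    exact h.trans (hmono hC)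
  have h := mul_le_mul_of_nonneg_left hD hρt.le
  have heq : (t * ρ₁ + (1 - t) * ρ₂) * (a * χ s₁ + b * χ s₂) =
      t * (ρ₁ * χ s₁) + (1 - t) * (ρ₂ * χ s₂) := by
    rw [ha_def, hb_def]; field_simp; try ring
  linarith [h, heq.ge]

/-- Convexity of `(x, ρ) ↦ x² / (2ρ)`. -/
lemma Sren_kin_scalar (a b ρ₁ ρ₂ t : ℝ) (hρ₁ : 0 < ρ₁) (hρ₂ : 0 < ρ₂)
    (ht : 0 ≤ t) (ht1 : t ≤ 1) (hρt : 0 < t * ρ₁ + (1 - t) * ρ₂) :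
    (t * a + (1 - t) * b) ^ 2 / (2 * (t * ρ₁ + (1 - t) * ρ₂)) ≤
      t * (a ^ 2 / (2 * ρ₁)) + (1 - t) * (b ^ 2 / (2 * ρ₂)) := by
  have heq : t * (a ^ 2 / (2 * ρ₁)) + (1 - t) * (b ^ 2 / (2 * ρ₂)) =
      (t * a ^ 2 * ρ₂ + (1 - t) * b ^ 2 * ρ₁) / (2 * ρ₁ * ρ₂) := by
    field_simp
  rw [heq, div_le_div_iff₀ (by positivity) (by positivity)]
  nlinarith [mul_nonneg (mul_nonneg ht (by linarith : (0:ℝ) ≤ 1 - t)) (sq_nonneg (a * ρ₂ - b * ρ₁)),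
    mul_pos hρ₁ hρ₂]

/-- Convexity of the kinetic energy `(m, ρ) ↦ ‖m‖² / (2ρ)`. -/
lemma Sren_kinetic (m₁ m₂ : EuclideanSpace ℝ (Fin 3)) (ρ₁ ρ₂ t : ℝ) (hρ₁ : 0 < ρ₁)
    (hρ₂ : 0 < ρ₂) (ht : 0 ≤ t) (ht1 : t ≤ 1) (hρt : 0 < t * ρ₁ + (1 - t) * ρ₂) :
    ‖t • m₁ + (1 - t) • m₂‖ ^ 2 / (2 * (t * ρ₁ + (1 - t) * ρ₂)) ≤
      t * (‖m₁‖ ^ 2 / (2 * ρ₁)) + (1 - t) * (‖m₂‖ ^ 2 / (2 * ρ₂)) := by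
  have hn : ‖t • m₁ + (1 - t) • m₂‖ ≤ t * ‖m₁‖ + (1 - t) * ‖m₂‖ := by
    refine (norm_add_le _ _).trans ?_
    rw [norm_smul, norm_smul, Real.norm_eq_abs, Real.norm_eq_abs,
      abs_of_nonneg ht, abs_of_nonneg (by linarith : (0:ℝ) ≤ 1 - t)]
  have hsq : ‖t • m₁ + (1 - t) • m₂‖ ^ 2 ≤ (t * ‖m₁‖ + (1 - t) * ‖m₂‖) ^ 2 :=
    pow_le_pow_left₀ (norm_nonneg _) hn 2
  calc ‖t • m₁ + (1 - t) • m₂‖ ^ 2 / (2 * (t * ρ₁ + (1 - t) * ρ₂))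
      ≤ (t * ‖m₁‖ + (1 - t) * ‖m₂‖) ^ 2 / (2 * (t * ρ₁ + (1 - t) * ρ₂)) := by gcongr
    _ ≤ _ := Sren_kin_scalar _ _ _ _ _ hρ₁ hρ₂ ht ht1 hρt

/-- The mixed (interior–vacuum) case. -/
lemma Sren_vac_mix (cv : ℝ) (hcv : 0 < cv) (χ : ℝ → ℝ) (hmono : Monotone χ)
    (ρ e ec τ : ℝ) (hρ : 0 < ρ) (he : 0 < e) (hτ : 0 < τ) (hτ1 : τ ≤ 1) (hec : τ * e ≤ ec) :
    τ * (ρ * χ (cv * Real.log (e / (cv * ρ ^ (1 + 1 / cv))))) ≤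
      (τ * ρ) * χ (cv * Real.log (ec / (cv * (τ * ρ) ^ (1 + 1 / cv)))) := by
  have hγ : (1 : ℝ) ≤ 1 + 1 / cv := by
    have : 0 < 1 / cv := by positivity
    linarith
  have h1 : (τ * ρ) ^ (1 + 1 / cv) ≤ τ * ρ ^ (1 + 1 / cv) := by
    rw [Real.mul_rpow hτ.le hρ.le]
    have h : τ ^ (1 + 1 / cv) ≤ τ ^ (1 : ℝ) :=
      Real.rpow_le_rpow_of_exponent_ge hτ hτ1 hγ
    rw [Real.rpow_one] at h
    exact mul_le_mul_of_nonneg_right h (Real.rpow_nonneg hρ.le _)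
  have h2 : e / (cv * ρ ^ (1 + 1 / cv)) ≤ ec / (cv * (τ * ρ) ^ (1 + 1 / cv)) := by
    rw [div_le_div_iff₀ (by positivity) (by positivity)]
    calc e * (cv * (τ * ρ) ^ (1 + 1 / cv)) ≤ e * (cv * (τ * ρ ^ (1 + 1 / cv))) := by gcongr
      _ = (τ * e) * (cv * ρ ^ (1 + 1 / cv)) := by ring
      _ ≤ ec * (cv * ρ ^ (1 + 1 / cv)) := mul_le_mul_of_nonneg_right hec (by positivity)
  have h3 : χ (cv * Real.log (e / (cv * ρ ^ (1 + 1 / cv)))) ≤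
      χ (cv * Real.log (ec / (cv * (τ * ρ) ^ (1 + 1 / cv)))) :=
    hmono (mul_le_mul_of_nonneg_left (Real.log_le_log (by positivity) h2) hcv.le)
  calc τ * (ρ * χ (cv * Real.log (e / (cv * ρ ^ (1 + 1 / cv)))))
      = (τ * ρ) * χ (cv * Real.log (e / (cv * ρ ^ (1 + 1 / cv)))) := by ring
    _ ≤ _ := mul_le_mul_of_nonneg_left h3 (by positivity)

lemma Sren_ne_bot (cv : ℝ) (χ : ℝ → ℝ) (ρ : ℝ) (m : EuclideanSpace ℝ (Fin 3)) (E : ℝ)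
    (h : Sren cv χ (ρ, m, E) ≠ ⊥) :
    (0 < ρ ∧ ‖m‖ ^ 2 / (2 * ρ) < E) ∨ (ρ = 0 ∧ m = 0) := by
  unfold Sren at h
  split_ifs at h with h1 h2
  · exact Or.inl h1
  · exact Or.inr h2
  · exact absurd rfl h

lemma Sren_of_pos (cv : ℝ) (χ : ℝ → ℝ) (ρ : ℝ) (m : EuclideanSpace ℝ (Fin 3)) (E : ℝ)
    (hρ : 0 < ρ) (hE : ‖m‖ ^ 2 / (2 * ρ) < E) :
    Sren cv χ (ρ, m, E) =
      ((ρ * χ (cv * Real.log ((E - ‖m‖ ^ 2 / (2 * ρ)) / (cv * ρ ^ (1 + 1 / cv)))) : ℝ) : EReal) := by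
  unfold Sren
  rw [if_pos ⟨hρ, hE⟩]

lemma Sren_of_vac (cv : ℝ) (χ : ℝ → ℝ) (ρ : ℝ) (m : EuclideanSpace ℝ (Fin 3)) (E : ℝ)
    (hρ : ρ = 0) (hm : m = 0) : Sren cv χ (ρ, m, E) = 0 := by
  unfold Sren
  rw [if_neg, if_pos ⟨hρ, hm⟩]
  rintro ⟨h1, -⟩
  rw [hρ] at h1
  exact lt_irrefl 0 h1

end Aux

/-- For `cᵥ > 0` and `χ` non-decreasing, concave, bounded above, the renormalized total
entropy `𝒮_χ` is concave on `{ρ ≥ 0, m ∈ ℝ³, E ≥ 0}`. -/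
theorem Sren_concave (cv χinf : ℝ) (hcv : 0 < cv) (χ : ℝ → ℝ)
    (hmono : Monotone χ) (hconc : ConcaveOn ℝ Set.univ χ) (hbdd : ∀ s : ℝ, χ s ≤ χinf) :
    ∀ p q : ℝ × EuclideanSpace ℝ (Fin 3) × ℝ,
      0 ≤ p.1 → 0 ≤ p.2.2 → 0 ≤ q.1 → 0 ≤ q.2.2 →
      ∀ t : ℝ, 0 ≤ t → t ≤ 1 →
      ((t : ℝ) : EReal) * Sren cv χ p + (((1 - t : ℝ)) : EReal) * Sren cv χ q ≤
        Sren cv χ (t • p + (1 - t) • q) := by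
  intro p q hρp hEp hρq hEq t ht ht1
  obtain ⟨ρ₁, m₁, E₁⟩ := p
  obtain ⟨ρ₂, m₂, E₂⟩ := q
  dsimp only at hρp hEp hρq hEq
  rcases ht.lt_or_eq with h0 | h0
  swap
  · rw [← h0]
    norm_num
  rcases ht1.eq_or_lt with h1 | h1
  · rw [h1]
    norm_num
  have ht1' : (0:ℝ) < 1 - t := by linarith
  by_cases hp : Sren cv χ (ρ₁, m₁, E₁) = ⊥
  · rw [hp, EReal.mul_bot_of_pos (EReal.coe_pos.2 h0), EReal.bot_add]
    exact bot_le
  by_cases hq : Sren cv χ (ρ₂, m₂, E₂) = ⊥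
  · rw [hq, EReal.mul_bot_of_pos (EReal.coe_pos.2 ht1'), EReal.add_bot]
    exact bot_le
  have hcombo : t • ((ρ₁, m₁, E₁) : ℝ × EuclideanSpace ℝ (Fin 3) × ℝ) + (1 - t) • (ρ₂, m₂, E₂)
      = (t * ρ₁ + (1 - t) * ρ₂, t • m₁ + (1 - t) • m₂, t * E₁ + (1 - t) * E₂) := rfl
  rcases Sren_ne_bot cv χ ρ₁ m₁ E₁ hp with ⟨hρ₁, hK₁⟩ | ⟨hρ₁0, hm₁0⟩ <;>
    rcases Sren_ne_bot cv χ ρ₂ m₂ E₂ hq with ⟨hρ₂, hK₂⟩ | ⟨hρ₂0, hm₂0⟩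
  · -- both interior
    have hρt : 0 < t * ρ₁ + (1 - t) * ρ₂ := by
      nlinarith [mul_pos h0 hρ₁, mul_pos ht1' hρ₂]
    have hkin := Sren_kinetic m₁ m₂ ρ₁ ρ₂ t hρ₁ hρ₂ ht ht1 hρt
    have hKc : ‖t • m₁ + (1 - t) • m₂‖ ^ 2 / (2 * (t * ρ₁ + (1 - t) * ρ₂)) <
        t * E₁ + (1 - t) * E₂ := by
      have ha := mul_lt_mul_of_pos_left hK₁ h0
      have hb := mul_lt_mul_of_pos_left hK₂ ht1'
      linarith
    rw [hcombo, Sren_of_pos cv χ _ _ _ hρt hKc, Sren_of_pos cv χ _ _ _ hρ₁ hK₁,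
      Sren_of_pos cv χ _ _ _ hρ₂ hK₂, ← EReal.coe_mul, ← EReal.coe_mul, ← EReal.coe_add,
      EReal.coe_le_coe_iff]
    have he₁ : 0 < E₁ - ‖m₁‖ ^ 2 / (2 * ρ₁) := by linarith
    have he₂ : 0 < E₂ - ‖m₂‖ ^ 2 / (2 * ρ₂) := by linarith
    have hebar : 0 < t * (E₁ - ‖m₁‖ ^ 2 / (2 * ρ₁)) + (1 - t) * (E₂ - ‖m₂‖ ^ 2 / (2 * ρ₂)) := by
      nlinarith [mul_pos h0 he₁, mul_pos ht1' he₂]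
    exact le_trans
      (Sren_scalar_key cv hcv χ hmono hconc ρ₁ (E₁ - ‖m₁‖ ^ 2 / (2 * ρ₁)) ρ₂
        (E₂ - ‖m₂‖ ^ 2 / (2 * ρ₂)) t hρ₁ he₁ hρ₂ he₂ ht ht1)
      (Sren_mono_e cv hcv χ hmono (t * ρ₁ + (1 - t) * ρ₂)
        (t * (E₁ - ‖m₁‖ ^ 2 / (2 * ρ₁)) + (1 - t) * (E₂ - ‖m₂‖ ^ 2 / (2 * ρ₂)))
        (t * E₁ + (1 - t) * E₂ -
          ‖t • m₁ + (1 - t) • m₂‖ ^ 2 / (2 * (t * ρ₁ + (1 - t) * ρ₂)))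
        hρt hebar (by linarith))
  · -- p interior, q vacuum
    subst hρ₂0 hm₂0
    have hρc : 0 < t * ρ₁ + (1 - t) * 0 := by
      nlinarith [mul_pos h0 hρ₁]
    have hm : ‖t • m₁ + (1 - t) • (0 : EuclideanSpace ℝ (Fin 3))‖ ^ 2 = t ^ 2 * ‖m₁‖ ^ 2 := by
      rw [smul_zero, add_zero, norm_smul, Real.norm_eq_abs, abs_of_nonneg ht, mul_pow]
    have hKid : ‖t • m₁ + (1 - t) • (0 : EuclideanSpace ℝ (Fin 3))‖ ^ 2 /
        (2 * (t * ρ₁ + (1 - t) * 0)) = t * (‖m₁‖ ^ 2 / (2 * ρ₁)) := by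
      rw [hm]
      field_simp
      ring
    have hKc : ‖t • m₁ + (1 - t) • (0 : EuclideanSpace ℝ (Fin 3))‖ ^ 2 /
        (2 * (t * ρ₁ + (1 - t) * 0)) < t * E₁ + (1 - t) * E₂ := by
      rw [hKid]
      have ha := mul_lt_mul_of_pos_left hK₁ h0
      have hb := mul_nonneg ht1'.le hEq
      linarith
    rw [hcombo, Sren_of_pos cv χ _ _ _ hρc hKc, Sren_of_pos cv χ _ _ _ hρ₁ hK₁,
      Sren_of_vac cv χ 0 0 E₂ rfl rfl, mul_zero, add_zero, ← EReal.coe_mul,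
      EReal.coe_le_coe_iff]
    have he₁ : 0 < E₁ - ‖m₁‖ ^ 2 / (2 * ρ₁) := by linarith
    have hρeq : t * ρ₁ + (1 - t) * 0 = t * ρ₁ := by ring
    rw [hρeq]
    refine Sren_vac_mix cv hcv χ hmono ρ₁ (E₁ - ‖m₁‖ ^ 2 / (2 * ρ₁)) _ t hρ₁ he₁ h0 ht1 ?_
    have hKid' : ‖t • m₁ + (1 - t) • (0 : EuclideanSpace ℝ (Fin 3))‖ ^ 2 / (2 * (t * ρ₁)) =
        t * (‖m₁‖ ^ 2 / (2 * ρ₁)) := by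
      rw [hm]
      field_simp
    rw [hKid']
    have hb := mul_nonneg ht1'.le hEq
    linarith
  · -- p vacuum, q interior
    subst hρ₁0 hm₁0
    have hρc : 0 < t * 0 + (1 - t) * ρ₂ := by
      nlinarith [mul_pos ht1' hρ₂]
    have hm : ‖t • (0 : EuclideanSpace ℝ (Fin 3)) + (1 - t) • m₂‖ ^ 2 =
        (1 - t) ^ 2 * ‖m₂‖ ^ 2 := by
      rw [smul_zero, zero_add, norm_smul, Real.norm_eq_abs, abs_of_nonneg ht1'.le, mul_pow]
    have hKc : ‖t • (0 : EuclideanSpace ℝ (Fin 3)) + (1 - t) • m₂‖ ^ 2 /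
        (2 * (t * 0 + (1 - t) * ρ₂)) < t * E₁ + (1 - t) * E₂ := by
      have hKid : ‖t • (0 : EuclideanSpace ℝ (Fin 3)) + (1 - t) • m₂‖ ^ 2 /
          (2 * (t * 0 + (1 - t) * ρ₂)) = (1 - t) * (‖m₂‖ ^ 2 / (2 * ρ₂)) := by
        rw [hm]
        field_simp
        ring
      rw [hKid]
      have ha := mul_lt_mul_of_pos_left hK₂ ht1'
      have hb := mul_nonneg ht hEp
      linarith
    rw [hcombo, Sren_of_pos cv χ _ _ _ hρc hKc, Sren_of_pos cv χ _ _ _ hρ₂ hK₂,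
      Sren_of_vac cv χ 0 0 E₁ rfl rfl, mul_zero, zero_add, ← EReal.coe_mul,
      EReal.coe_le_coe_iff]
    have he₂ : 0 < E₂ - ‖m₂‖ ^ 2 / (2 * ρ₂) := by linarith
    have hρeq : t * 0 + (1 - t) * ρ₂ = (1 - t) * ρ₂ := by ring
    rw [hρeq]
    refine Sren_vac_mix cv hcv χ hmono ρ₂ (E₂ - ‖m₂‖ ^ 2 / (2 * ρ₂)) _ (1 - t) hρ₂ he₂ ht1'
      (by linarith) ?_
    have hKid' : ‖t • (0 : EuclideanSpace ℝ (Fin 3)) + (1 - t) • m₂‖ ^ 2 /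
        (2 * ((1 - t) * ρ₂)) = (1 - t) * (‖m₂‖ ^ 2 / (2 * ρ₂)) := by
      rw [hm]
      field_simp
    rw [hKid']
    have hb := mul_nonneg ht hEp
    linarith
  · -- both vacuum
    subst hρ₁0 hm₁0 hρ₂0 hm₂0
    rw [hcombo,
      Sren_of_vac cv χ (t * 0 + (1 - t) * 0)
        (t • (0 : EuclideanSpace ℝ (Fin 3)) + (1 - t) • 0) (t * E₁ + (1 - t) * E₂)
        (by ring) (by simp),
      Sren_of_vac cv χ 0 0 E₁ rfl rfl, Sren_of_vac cv χ 0 0 E₂ rfl rfl,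
      mul_zero, mul_zero, add_zero]
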